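/- Let k ∈ ℕ and let h : ℂ \ {0} → ℝ be of class C² and harmonic, i.e. D²h(λ)(1,1) + D²h(λ)(i,i) = 0 for all λ ≠ 0, where D²h denotes the second real Fréchet derivative. Suppose there exists C ≥ 0 such that |h(λ) − 2k·log|λ|| ≤ C for all λ ∈ ℂ \ {0} (h has a logarithmic singularity of weight 2k at the origin and grows like 2k·log|λ| at infinity, up to a bounded term). Then there exists a constant c ∈ ℝ such that h(λ) = 2k·log|λ| + c for all λ ∈ ℂ \ {0}. -/

import Mathlib

open Complex

open MeasureTheory intervalIntegral

section helpers
lemma clm_decomp {F : Type*} [NormedAddCommGroup F] [NormedSpace ℝ F]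
    (T : ℂ →L[ℝ] F) (z : ℂ) : T z = z.re • T 1 + z.im • T I := by
  have hz : z = z.re • (1 : ℂ) + z.im • I := by
    rw [Complex.real_smul, Complex.real_smul, mul_one]
    exact (Complex.re_add_im z).symm
  conv_lhs => rw [hz]
  rw [map_add, T.map_smul, T.map_smul]

lemma clm_ext_complex {F : Type*} [NormedAddCommGroup F] [NormedSpace ℝ F]
    {T T' : ℂ →L[ℝ] F} (h1 : T 1 = T' 1) (hI : T I = T' I) : T = T' := by
  ext z
  rw [clm_decomp T z, clm_decomp T' z, h1, hI]

lemma differentiableAt_of_CR {f : ℂ → ℂ} {M : ℂ →L[ℝ] ℂ} {w : ℂ}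
    (hf : HasFDerivAt f M w) (hCR : M I = I * M 1) : DifferentiableAt ℂ f w := by
  refine ⟨(1 : ℂ →L[ℂ] ℂ).smulRight (M 1),
    hasFDerivAt_of_restrictScalars (𝕜 := ℝ) hf ?_⟩
  refine clm_ext_complex ?_ ?_ <;>
    simp [ContinuousLinearMap.smulRight_apply, smul_eq_mul, hCR]
end helpers

/-- If `φ` is entire and the real part of `∫₀¹ φ(w+t) dt` is bounded above, then `φ` has
period `1`. -/
lemma horiz_period {φ : ℂ → ℂ} (hφ : Differentiable ℂ φ) (B : ℝ)
    (hB : ∀ w : ℂ, (∫ t in (0:ℝ)..1, φ (w + t)).re ≤ B) :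
    ∀ w : ℂ, φ (w + 1) = φ w := by
  have hc : Continuous φ := hφ.continuous
  have hφ' : Continuous (deriv φ) := (hφ.contDiff (n := 2)).continuous_deriv (by norm_num)
  set P : ℂ → ℂ := fun w => ∫ t in (0:ℝ)..1, φ (w + t) with hPdef
  -- continuity facts
  have hline : ∀ (w₀ : ℂ), Continuous fun t : ℝ => φ (w₀ + t) := by
    intro w₀; exact hc.comp (by continuity)
  have hline' : ∀ (w₀ : ℂ), Continuous fun t : ℝ => deriv φ (w₀ + t) := by
    intro w₀; exact hφ'.comp (by continuity)
  -- derivative of P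
  have key : ∀ w₀ : ℂ, HasDerivAt P (φ (w₀ + 1) - φ w₀) w₀ := by
    intro w₀
    obtain ⟨M, hM⟩ := (isCompact_closedBall w₀ 2).exists_bound_of_continuousOn
      hφ'.continuousOn
    have hF : HasFDerivAt (fun w : ℂ => ∫ t in (0:ℝ)..1, φ (w + t))
        (∫ t in (0:ℝ)..1, (1 : ℂ →L[ℂ] ℂ).smulRight (deriv φ (w₀ + t))) w₀ := by
      apply intervalIntegral.hasFDerivAt_integral_of_dominated_of_fderiv_le
        (F := fun (x : ℂ) (t : ℝ) => φ (x + t))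
        (F' := fun (x : ℂ) (t : ℝ) => (1 : ℂ →L[ℂ] ℂ).smulRight (deriv φ (x + t)))
        (s := Metric.ball w₀ 1) (bound := fun _ => max M 0) (Metric.ball_mem_nhds w₀ one_pos)
      · filter_upwards with x
        exact ((hline x)).aestronglyMeasurable
      · exact ((hline w₀)).intervalIntegrable 0 1
      · apply Continuous.aestronglyMeasurable
        exact (ContinuousLinearMap.smulRightL ℂ ℂ ℂ 1).continuous.comp (hline' w₀)
      · filter_upwards with t ht x hx
        have hxt : x + t ∈ Metric.closedBall w₀ 2 := by
          rw [Metric.mem_closedBall]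
          have h1 : dist (x + (t:ℂ)) w₀ ≤ dist (x + (t:ℂ)) x + dist x w₀ := dist_triangle _ _ _
          have h2 : dist (x + (t:ℂ)) x = ‖(t:ℂ)‖ := by
            simp [Complex.dist_eq]
          have ht' : |t| ≤ 1 := by
            rw [Set.mem_uIoc] at ht
            rcases ht with ⟨h0, h1⟩ | ⟨h0, h1⟩ <;> [skip; linarith] <;>
              rw [abs_le] <;> constructor <;> linarith
          have : ‖(t:ℂ)‖ = |t| := Complex.norm_real t
          nlinarith [Metric.mem_ball.mp hx, dist_nonneg (x := x + (t:ℂ)) (y := x)]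
        calc ‖(1 : ℂ →L[ℂ] ℂ).smulRight (deriv φ (x + t))‖
            ≤ ‖(1 : ℂ →L[ℂ] ℂ)‖ * ‖deriv φ (x + t)‖ := (ContinuousLinearMap.norm_smulRight_apply _ _).le
          _ ≤ 1 * ‖deriv φ (x + t)‖ := by
              gcongr; exact ContinuousLinearMap.norm_id_le
          _ ≤ max M 0 := by
              rw [one_mul]; exact le_max_of_le_left (hM _ hxt)
      · exact intervalIntegrable_const
      · filter_upwards with t ht x hx
        have : HasDerivAt (fun w : ℂ => φ (w + t)) (deriv φ (x + t)) x := by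
          have h1 : HasDerivAt (fun w : ℂ => w + (t:ℂ)) 1 x := (hasDerivAt_id x).add_const _
          simpa [Function.comp_def] using (((hφ (x + t)).hasDerivAt).comp x h1)
        exact this.hasFDerivAt
    have heval : (∫ t in (0:ℝ)..1, (1 : ℂ →L[ℂ] ℂ).smulRight (deriv φ (w₀ + t))) 1
        = φ (w₀ + 1) - φ w₀ := by
      have hint : IntervalIntegrable (fun t : ℝ => (1 : ℂ →L[ℂ] ℂ).smulRight (deriv φ (w₀ + t)))
          volume 0 1 := by
        apply Continuous.intervalIntegrable
        exact (ContinuousLinearMap.smulRightL ℂ ℂ ℂ 1).continuous.comp (hline' w₀)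
      rw [ContinuousLinearMap.intervalIntegral_apply hint]
      simp only [ContinuousLinearMap.smulRight_apply, ContinuousLinearMap.one_apply, one_smul]
      -- FTC
      have hftc : ∀ t ∈ Set.uIcc (0:ℝ) 1, HasDerivAt (fun s : ℝ => φ (w₀ + s))
          (deriv φ (w₀ + t)) t := by
        intro t _
        have h1 : HasDerivAt (fun s : ℝ => w₀ + (s:ℂ)) 1 t := by
          simpa using (Complex.ofRealCLM.hasDerivAt (x := t)).const_add w₀
        simpa [Function.comp_def] using (((hφ (w₀ + t)).hasDerivAt.hasFDerivAt.restrictScalars ℝ).comp_hasDerivAt t h1)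
      have := intervalIntegral.integral_eq_sub_of_hasDerivAt hftc
        ((hline' w₀).intervalIntegrable 0 1)
      simpa using this
    have := hF.hasDerivAt
    rwa [heval] at this
  -- Liouville for exp ∘ P
  have hPdiff : Differentiable ℂ P := fun w => (key w).differentiableAt
  have hexpb : ∀ w, ‖Complex.exp (P w)‖ ≤ Real.exp B := by
    intro w
    rw [Complex.norm_exp]
    exact Real.exp_le_exp.2 (hB w)
  have liou : ∀ w, Complex.exp (P w) = Complex.exp (P 0) := by
    intro w
    refine (hPdiff.cexp).apply_eq_apply_of_bounded ?_ w 0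
    rw [Metric.isBounded_iff_subset_closedBall 0]
    refine ⟨Real.exp B, ?_⟩
    rintro - ⟨w, rfl⟩
    simpa [Metric.mem_closedBall, dist_eq_norm] using hexpb w
  intro w
  have h1 : HasDerivAt (fun w => Complex.exp (P w)) (Complex.exp (P w) * (φ (w + 1) - φ w)) w :=
    (key w).cexp
  have h2 : HasDerivAt (fun w => Complex.exp (P w)) 0 w := by
    have heq : (fun w => Complex.exp (P w)) = fun _ => Complex.exp (P 0) := funext liou
    rw [heq]; exact hasDerivAt_const _ _
  have h3 := h1.unique h2
  have h4 := mul_eq_zero.mp h3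
  rcases h4 with h4 | h4
  · exact absurd h4 (Complex.exp_ne_zero _)
  · exact sub_eq_zero.mp h4



set_option maxHeartbeats 1000000

/-- A harmonic function on `ℂ \ {0}` differing from `2k·log|λ|` by a bounded term equals
`2k·log|λ| + c` for some constant `c`. -/
theorem harmonic_log_singularity (k : ℕ) (h : ℂ → ℝ)
    (hC2 : ContDiffOn ℝ 2 h {0}ᶜ)
    (hharm : ∀ lam : ℂ, lam ≠ 0 →
      fderiv ℝ (fderiv ℝ h) lam 1 1 + fderiv ℝ (fderiv ℝ h) lam Complex.I Complex.I = 0)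
    (C : ℝ) (hC : 0 ≤ C)
    (hbd : ∀ lam : ℂ, lam ≠ 0 →
      |h lam - 2 * (k : ℝ) * Real.log ‖lam‖| ≤ C) :
    ∃ c : ℝ, ∀ lam : ℂ, lam ≠ 0 →
      h lam = 2 * (k : ℝ) * Real.log ‖lam‖ + c := by
  set ψ : ℂ → ℂ := fun w =>
    ((fderiv ℝ h (Complex.exp w) 1 : ℝ) - I * (fderiv ℝ h (Complex.exp w) I : ℝ))
      * Complex.exp w - 2 * k with hψdef
  set u : ℂ → ℝ := fun w => h (Complex.exp w) - 2 * k * w.re with hudef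
  -- basic facts at points exp w
  have hexpne : ∀ w : ℂ, Complex.exp w ≠ 0 := Complex.exp_ne_zero
  have hce : ∀ w : ℂ, ContDiffAt ℝ 2 h (Complex.exp w) := fun w =>
    hC2.contDiffAt (isOpen_compl_singleton.mem_nhds (by simp [hexpne w]))
  have hD : ∀ w : ℂ, HasFDerivAt h (fderiv ℝ h (Complex.exp w)) (Complex.exp w) := fun w =>
    ((hce w).differentiableAt (by norm_num)).hasFDerivAt
  have hB : ∀ w : ℂ, HasFDerivAt (fderiv ℝ h) (fderiv ℝ (fderiv ℝ h) (Complex.exp w))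
      (Complex.exp w) := fun w =>
    (((hce w).fderiv_right (m := 1) (by norm_num)).differentiableAt one_ne_zero).hasFDerivAt
  have hexpd : ∀ w : ℂ, HasFDerivAt Complex.exp
      (((1 : ℂ →L[ℂ] ℂ).smulRight (Complex.exp w)).restrictScalars ℝ) w := fun w =>
    ((Complex.hasDerivAt_exp w).hasFDerivAt).restrictScalars ℝ
  -- Step A: ψ is entire
  have hψdiff : Differentiable ℂ ψ := by
    intro w₀
    set e := Complex.exp w₀ with he
    set D := fderiv ℝ h e with hDdef
    set B2 := fderiv ℝ (fderiv ℝ h) e with hB2def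
    obtain ⟨M, hM, hM1, hMI⟩ : ∃ M : ℂ →L[ℝ] ℂ, HasFDerivAt ψ M w₀ ∧
        M 1 = ((B2 e 1 : ℝ) - I * (B2 e I : ℝ)) * e + ((D 1 : ℝ) - I * (D I : ℝ)) * e ∧
        M I = ((B2 (I * e) 1 : ℝ) - I * (B2 (I * e) I : ℝ)) * e
            + ((D 1 : ℝ) - I * (D I : ℝ)) * (I * e) := by
      have hg : HasFDerivAt (fun w => fderiv ℝ h (Complex.exp w))
          (B2.comp (((1 : ℂ →L[ℂ] ℂ).smulRight e).restrictScalars ℝ)) w₀ :=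
        (hB w₀).comp w₀ (hexpd w₀)
      have hMh := (((Complex.ofRealCLM.hasFDerivAt.comp w₀
            (hg.clm_apply (hasFDerivAt_const (1:ℂ) w₀))).sub
            ((Complex.ofRealCLM.hasFDerivAt.comp w₀
            (hg.clm_apply (hasFDerivAt_const I w₀))).const_mul I)).mul (hexpd w₀)).sub_const
            (2 * (k:ℂ))
      refine ⟨_, hMh, ?_, ?_⟩
      · simp [ContinuousLinearMap.comp_apply, ContinuousLinearMap.flip_apply,
          ContinuousLinearMap.smulRight_apply, smul_eq_mul]
        ring
      · simp [ContinuousLinearMap.comp_apply, ContinuousLinearMap.flip_apply,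
          ContinuousLinearMap.smulRight_apply, smul_eq_mul]
        ring
    apply differentiableAt_of_CR hM
    rw [hM1, hMI]
    have hlin1 : B2 (I * e) 1 = (I*e).re * B2 1 1 + (I*e).im * B2 I 1 := by
      rw [clm_decomp B2 (I*e)]; simp
    have hlin2 : B2 (I * e) I = (I*e).re * B2 1 I + (I*e).im * B2 I I := by
      rw [clm_decomp B2 (I*e)]; simp
    have hlin3 : B2 e 1 = e.re * B2 1 1 + e.im * B2 I 1 := by
      rw [clm_decomp B2 e]; simp
    have hlin4 : B2 e I = e.re * B2 1 I + e.im * B2 I I := by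
      rw [clm_decomp B2 e]; simp
    have hsym : B2 1 I = B2 I 1 := (hce w₀).isSymmSndFDerivAt (by norm_num) 1 I
    have hharm2 : B2 I I = -(B2 1 1) := by
      have := hharm e (hexpne w₀); rw [← hB2def] at this; linarith
    rw [hlin1, hlin2, hlin3, hlin4, hsym, hharm2]
    simp only [Complex.mul_re, Complex.mul_im, Complex.I_re, Complex.I_im]
    push_cast
    linear_combination (↑e.re * ↑((B2 I) 1) - ↑e.im * ↑((B2 1) 1)) * e * Complex.I_sq
  -- Step B: derivative of u
  have hu : ∀ w : ℂ, HasFDerivAt u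
      (Complex.reCLM.comp (((ContinuousLinearMap.mul ℂ ℂ) (ψ w)).restrictScalars ℝ)) w := by
    intro w
    have hcomp : HasFDerivAt (fun w => h (Complex.exp w))
        ((fderiv ℝ h (Complex.exp w)).comp
          (((1 : ℂ →L[ℂ] ℂ).smulRight (Complex.exp w)).restrictScalars ℝ)) w :=
      (hD w).comp w (hexpd w)
    have hre : HasFDerivAt (fun w : ℂ => 2 * (k:ℝ) * w.re) ((2 * (k:ℝ)) • Complex.reCLM) w :=
      Complex.reCLM.hasFDerivAt.const_mul _
    have heq : Complex.reCLM.comp (((ContinuousLinearMap.mul ℂ ℂ) (ψ w)).restrictScalars ℝ)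
        = (fderiv ℝ h (Complex.exp w)).comp
            (((1 : ℂ →L[ℂ] ℂ).smulRight (Complex.exp w)).restrictScalars ℝ)
          - (2 * (k:ℝ)) • Complex.reCLM := by
      apply clm_ext_complex
      · have hd : fderiv ℝ h (Complex.exp w) (Complex.exp w)
            = (Complex.exp w).re * fderiv ℝ h (Complex.exp w) 1
              + (Complex.exp w).im * fderiv ℝ h (Complex.exp w) I := by
          rw [clm_decomp (fderiv ℝ h (Complex.exp w)) (Complex.exp w)]; simp
        simp [hψdef, ContinuousLinearMap.smulRight_apply, smul_eq_mul, hd,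
          Complex.mul_re, Complex.sub_re, Complex.mul_im]
        ring
      · have hd : fderiv ℝ h (Complex.exp w) (I * Complex.exp w)
            = (I * Complex.exp w).re * fderiv ℝ h (Complex.exp w) 1
              + (I * Complex.exp w).im * fderiv ℝ h (Complex.exp w) I := by
          rw [clm_decomp (fderiv ℝ h (Complex.exp w)) (I * Complex.exp w)]; simp
        simp [hψdef, ContinuousLinearMap.smulRight_apply, smul_eq_mul, hd,
          Complex.mul_re, Complex.sub_re, Complex.mul_im]
        ring
    rw [heq]
    exact hcomp.sub hre
  have hψcont : Continuous ψ := hψdiff.continuous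
  -- Step C: derivative of u along lines, and segment FTC
  have hline : ∀ (w d : ℂ) (t : ℝ), HasDerivAt (fun s : ℝ => u (w + s * d))
      ((ψ (w + t * d) * d).re) t := by
    intro w d t
    have hin : HasDerivAt (fun s : ℝ => w + (s : ℂ) * d) d t := by
      simpa using ((Complex.ofRealCLM.hasDerivAt (x := t)).mul_const d).const_add w
    have := (hu (w + t * d)).comp_hasDerivAt t hin
    simpa [Function.comp_def] using this
  have hseg : ∀ w d : ℂ, ∫ t in (0:ℝ)..1, (ψ (w + t * d) * d).re = u (w + d) - u w := by
    intro w d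
    have hcont : Continuous fun t : ℝ => (ψ (w + t * d) * d).re := by
      apply Complex.continuous_re.comp
      exact (hψcont.comp (continuous_const.add (Complex.continuous_ofReal.mul
        continuous_const))).mul continuous_const
    have := intervalIntegral.integral_eq_sub_of_hasDerivAt
      (f := fun s : ℝ => u (w + s * d)) (f' := fun t : ℝ => (ψ (w + t * d) * d).re)
      (fun t _ => hline w d t) (hcont.intervalIntegrable 0 1)
    simpa using this
  -- Step D: u is bounded
  have hubd : ∀ w : ℂ, |u w| ≤ C := by
    intro w
    have := hbd (Complex.exp w) (hexpne w)
    simpa [hudef, Complex.norm_exp, Real.log_exp] using this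
  have hdiffbd : ∀ w d : ℂ, u (w + d) - u w ≤ 2 * C := by
    intro w d
    have h1 := abs_le.mp (hubd (w + d))
    have h2 := abs_le.mp (hubd w)
    linarith [h1.1, h1.2, h2.1, h2.2]
  -- Step E: double periodicity of ψ
  have hper1 : ∀ w : ℂ, ψ (w + 1) = ψ w := by
    apply horiz_period hψdiff (2 * C)
    intro w
    have hint : IntervalIntegrable (fun t : ℝ => ψ (w + t)) volume 0 1 :=
      (hψcont.comp (continuous_const.add Complex.continuous_ofReal)).intervalIntegrable 0 1
    have h1 : (∫ t in (0:ℝ)..1, ψ (w + t)).re = ∫ t in (0:ℝ)..1, (ψ (w + t)).re :=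
      (Complex.reCLM.intervalIntegral_comp_comm hint).symm
    have h2 : (∫ t in (0:ℝ)..1, (ψ (w + t)).re) = ∫ t in (0:ℝ)..1, (ψ (w + t * 1) * 1).re := by
      congr 1 with t
      simp
    rw [h1, h2, hseg w 1]
    exact hdiffbd w 1
  have hperI : ∀ w : ℂ, ψ (w + I) = ψ w := by
    have hχd : Differentiable ℂ (fun w => I * ψ (I * w)) :=
      (hψdiff.comp (differentiable_id.const_mul I)).const_mul I
    have hχ : ∀ w : ℂ, I * ψ (I * (w + 1)) = I * ψ (I * w) := by
      apply horiz_period hχd (2 * C)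
      intro w
      have hint : IntervalIntegrable (fun t : ℝ => I * ψ (I * (w + t))) volume 0 1 := by
        apply Continuous.intervalIntegrable
        exact continuous_const.mul (hψcont.comp (continuous_const.mul
          (continuous_const.add Complex.continuous_ofReal)))
      have h1 : (∫ t in (0:ℝ)..1, I * ψ (I * (w + t))).re
          = ∫ t in (0:ℝ)..1, (I * ψ (I * (w + t))).re :=
        (Complex.reCLM.intervalIntegral_comp_comm hint).symm
      have h2 : (∫ t in (0:ℝ)..1, (I * ψ (I * (w + t))).re)
          = ∫ t in (0:ℝ)..1, (ψ (I * w + t * I) * I).re := by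
        congr 1 with t
        have harg : I * (w + (t:ℂ)) = I * w + (t:ℂ) * I := by ring
        rw [harg, mul_comm]
      rw [h1, h2, hseg (I * w) I]
      exact hdiffbd (I * w) I
    intro z
    have := hχ (-I * z)
    have he1 : I * (-I * z + 1) = z + I := by
      have : I * I = -1 := Complex.I_mul_I
      ring_nf
      rw [Complex.I_sq]
      ring
    have he2 : I * (-I * z) = z := by
      have : I * I = -1 := Complex.I_mul_I
      ring_nf
      rw [Complex.I_sq]
      ring
    rw [he1, he2] at this
    exact mul_left_cancel₀ Complex.I_ne_zero this
  -- Step F: ψ is bounded, hence constant by Liouville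
  obtain ⟨M, hM⟩ := (isCompact_closedBall (0:ℂ) 2).exists_bound_of_continuousOn
    hψcont.continuousOn
  have hψb : ∀ w : ℂ, ‖ψ w‖ ≤ M := by
    intro w
    have p1 : Function.Periodic ψ (1 : ℂ) := hper1
    have pI : Function.Periodic ψ I := hperI
    have key : ψ (w - ⌊w.re⌋ • (1:ℂ) - ⌊w.im⌋ • I) = ψ w := by
      rw [pI.sub_zsmul_eq, p1.sub_zsmul_eq]
    rw [← key]
    apply hM
    rw [Metric.mem_closedBall, Complex.dist_eq, sub_zero]
    set z' := w - ⌊w.re⌋ • (1:ℂ) - ⌊w.im⌋ • I with hz'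
    have hre : z'.re = w.re - ⌊w.re⌋ := by
      simp [hz', zsmul_eq_mul]
    have him : z'.im = w.im - ⌊w.im⌋ := by
      simp [hz', zsmul_eq_mul]
    calc ‖z'‖ ≤ |z'.re| + |z'.im| := Complex.norm_le_abs_re_add_abs_im z'
      _ ≤ 2 := by
          rw [hre, him, Int.self_sub_floor, Int.self_sub_floor]
          rw [_root_.abs_of_nonneg (Int.fract_nonneg w.re),
            _root_.abs_of_nonneg (Int.fract_nonneg w.im)]
          linarith [(Int.fract_lt_one w.re).le, (Int.fract_lt_one w.im).le]
  have hψconst : ∀ w : ℂ, ψ w = ψ 0 := by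
    intro w
    refine hψdiff.apply_eq_apply_of_bounded ?_ w 0
    rw [Metric.isBounded_iff_subset_closedBall 0]
    exact ⟨M, by rintro - ⟨w, rfl⟩; simpa [Metric.mem_closedBall, dist_eq_norm] using hψb w⟩
  -- Step G: the constant value is 0
  have hre0 : ∀ w : ℂ, u (w + 1) - u w = (ψ 0).re := by
    intro w
    rw [← hseg w 1]
    have : (∫ t in (0:ℝ)..1, (ψ (w + t * 1) * 1).re) = ∫ t in (0:ℝ)..1, (ψ 0).re := by
      congr 1 with t
      rw [mul_one, hψconst]
    rw [this]
    simp
  have him0 : ∀ w : ℂ, u (w + I) - u w = -(ψ 0).im := by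
    intro w
    rw [← hseg w I]
    have : (∫ t in (0:ℝ)..1, (ψ (w + t * I) * I).re) = ∫ t in (0:ℝ)..1, -(ψ 0).im := by
      congr 1 with t
      rw [hψconst]
      simp
    rw [this]
    simp
  have habs : ∀ x : ℝ, (∀ n : ℕ, (n : ℝ) * |x| ≤ 2 * C) → x = 0 := by
    intro x hx
    by_contra hne
    obtain ⟨n, hn⟩ := exists_nat_gt ((2 * C) / |x|)
    have hxpos : 0 < |x| := abs_pos.mpr hne
    have : 2 * C < (n : ℝ) * |x| := by
      rw [div_lt_iff₀ hxpos] at hn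
      linarith
    linarith [hx n]
  have hre00 : (ψ 0).re = 0 := by
    apply habs
    intro n
    have hn : ∀ m : ℕ, u ((m : ℂ)) = u 0 + m * (ψ 0).re := by
      intro m
      induction m with
      | zero => simp
      | succ m ih =>
        have h2 := hre0 ((m : ℂ))
        push_cast
        push_cast at ih
        linarith
    have h1 := hn n
    have h2 := abs_le.mp (hubd ((n : ℂ)))
    have h3 := abs_le.mp (hubd 0)
    rcases abs_cases ((ψ 0).re) with ⟨hc1, _⟩ | ⟨hc1, _⟩ <;> rw [hc1] <;>
      nlinarith [h2.1, h2.2, h3.1, h3.2]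
  have him00 : (ψ 0).im = 0 := by
    apply habs
    intro n
    have hn : ∀ m : ℕ, u ((m : ℂ) * I) = u 0 - m * (ψ 0).im := by
      intro m
      induction m with
      | zero => simp
      | succ m ih =>
        have h2 := him0 ((m : ℂ) * I)
        have hcast : ((m : ℂ) + 1) * I = (m : ℂ) * I + I := by ring
        push_cast
        rw [hcast]
        push_cast at ih
        linarith
    have h1 := hn n
    have h2 := abs_le.mp (hubd ((n : ℂ) * I))
    have h3 := abs_le.mp (hubd 0)
    rcases abs_cases ((ψ 0).im) with ⟨hc1, _⟩ | ⟨hc1, _⟩ <;> rw [hc1] <;>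
      nlinarith [h2.1, h2.2, h3.1, h3.2]
  have hψ0 : ∀ w : ℂ, ψ w = 0 := by
    intro w
    rw [hψconst w]
    exact Complex.ext hre00 him00
  -- Step H: u is constant
  have huc : ∀ w : ℂ, u w = u 0 := by
    have hdiffu : Differentiable ℝ u := fun w => (hu w).differentiableAt
    have hzero : ∀ w : ℂ, fderiv ℝ u w = 0 := by
      intro w
      have h0 : Complex.reCLM.comp
          (((ContinuousLinearMap.mul ℂ ℂ) (ψ w)).restrictScalars ℝ) = 0 := by
        rw [hψ0 w]
        ext z
        simp
      rw [(hu w).fderiv, h0]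
    exact fun w => is_const_of_fderiv_eq_zero hdiffu hzero w 0
  -- Step I: conclusion
  refine ⟨h 1, fun lam hlam => ?_⟩
  have h1 := huc (Complex.log lam)
  have h2 : u (Complex.log lam) = h lam - 2 * k * Real.log ‖lam‖ := by
    simp [hudef, Complex.exp_log hlam, Complex.log_re]
  have h3 : u 0 = h 1 := by simp [hudef]
  linarith
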